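/- With the two-qubit POVM N⁰, N¹, N^⊥ as above and dark count parameter p_d ∈ [0,1], the operators N̄^{0/1} := ½·1 − ((1−p_d)²/2)·N^⊥ ± ((1−p_d)/2)(N⁰ − N¹) are positive semidefinite, and N̄⁰ + N̄¹ + (1−p_d)² N^⊥ = 1. -/

import Mathlib

open Matrix ComplexOrder

def ket2 (a b : Fin 2) : Fin 2 × Fin 2 → ℂ := fun p => if p = (a, b) then 1 else 0

noncomputable def proj (v : Fin 2 × Fin 2 → ℂ) : Matrix (Fin 2 × Fin 2) (Fin 2 × Fin 2) ℂ :=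
  vecMulVec v (star v)

noncomputable def phiPlus : Fin 2 × Fin 2 → ℂ :=
  fun p => (ket2 0 1 p + ket2 1 0 p) / (Real.sqrt 2 : ℂ)

noncomputable def phiMinus : Fin 2 × Fin 2 → ℂ :=
  fun p => (ket2 0 1 p - ket2 1 0 p) / (Real.sqrt 2 : ℂ)

noncomputable def Nzero : Matrix (Fin 2 × Fin 2) (Fin 2 × Fin 2) ℂ :=
  proj phiPlus + (1 / 2 : ℂ) • proj (ket2 1 1)

noncomputable def None' : Matrix (Fin 2 × Fin 2) (Fin 2 × Fin 2) ℂ :=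
  proj phiMinus + (1 / 2 : ℂ) • proj (ket2 1 1)

noncomputable def Nbot : Matrix (Fin 2 × Fin 2) (Fin 2 × Fin 2) ℂ :=
  proj (ket2 0 0)

lemma proj_posSemidef (v : Fin 2 × Fin 2 → ℂ) : (proj v).PosSemidef := by
  have : proj v = replicateCol Unit v * (replicateCol Unit v)ᴴ := by
    rw [conjTranspose_replicateCol, proj, vecMulVec_eq Unit]
  rw [this]
  exact posSemidef_self_mul_conjTranspose _

lemma psd_rsmul {M : Matrix (Fin 2 × Fin 2) (Fin 2 × Fin 2) ℂ} (hM : M.PosSemidef)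
    {c : ℝ} (hc : 0 ≤ c) : (c • M).PosSemidef := by
  have : (c • M) = ((c : ℂ) • M) := by
    ext i j; simp [Matrix.smul_apply, Complex.real_smul]
  rw [this]
  constructor
  · ext i j
    simp [conjTranspose_apply, Matrix.smul_apply, hM.1.apply]
  · intro x
    exact (hM.smul (a := (c : ℂ)) (by exact_mod_cast Complex.zero_le_real.mpr hc)).2 x

lemma decomp (q : ℝ) :
    (1 / 2 : ℝ) • (1 : Matrix (Fin 2 × Fin 2) (Fin 2 × Fin 2) ℂ)
        - (q ^ 2 / 2 : ℝ) • Nbot + (q / 2 : ℝ) • (Nzero - None')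
      = ((1 - q ^ 2) / 2 : ℝ) • proj (ket2 0 0) + (1 / 2 : ℝ) • proj (ket2 1 1)
        + ((1 + q) / 2 : ℝ) • proj phiPlus + ((1 - q) / 2 : ℝ) • proj phiMinus := by
  have h2 : ((Real.sqrt 2 : ℝ) : ℂ) * ((Real.sqrt 2 : ℝ) : ℂ) = 2 := by
    rw [← Complex.ofReal_mul, Real.mul_self_sqrt (by norm_num)]
    norm_num
  have hne : ((Real.sqrt 2 : ℝ) : ℂ) ≠ 0 := by
    simp [Real.sqrt_eq_zero']
  ext ⟨i, j⟩ ⟨k, l⟩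
  fin_cases i <;> fin_cases j <;> fin_cases k <;> fin_cases l <;>
    simp [Nzero, None', Nbot, proj, phiPlus, phiMinus, ket2, vecMulVec_apply,
      Matrix.one_apply, Matrix.smul_apply, Prod.ext_iff, div_mul_div_comm, Complex.ext_iff] <;>
    field_simp <;> grind

theorem squashed_darkCount_POVM (pd : ℝ) (hpd : pd ∈ Set.Icc (0 : ℝ) 1) :
    let Nbar0 : Matrix (Fin 2 × Fin 2) (Fin 2 × Fin 2) ℂ :=
      (1 / 2 : ℝ) • (1 : Matrix (Fin 2 × Fin 2) (Fin 2 × Fin 2) ℂ)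
        - ((1 - pd) ^ 2 / 2 : ℝ) • Nbot + ((1 - pd) / 2 : ℝ) • (Nzero - None')
    let Nbar1 : Matrix (Fin 2 × Fin 2) (Fin 2 × Fin 2) ℂ :=
      (1 / 2 : ℝ) • (1 : Matrix (Fin 2 × Fin 2) (Fin 2 × Fin 2) ℂ)
        - ((1 - pd) ^ 2 / 2 : ℝ) • Nbot - ((1 - pd) / 2 : ℝ) • (Nzero - None')
    Nbar0.PosSemidef ∧ Nbar1.PosSemidef ∧
      Nbar0 + Nbar1 + ((1 - pd) ^ 2 : ℝ) • Nbot = 1 := by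
  obtain ⟨h0, h1⟩ := hpd
  intro Nbar0 Nbar1
  set q : ℝ := 1 - pd with hq
  have hq0 : 0 ≤ q := by simp [hq]; linarith
  have hq1 : q ≤ 1 := by simp [hq]; linarith
  have hsq : 0 ≤ (1 - q ^ 2) / 2 := by nlinarith
  refine ⟨?_, ?_, ?_⟩
  · show ((1 / 2 : ℝ) • (1 : Matrix (Fin 2 × Fin 2) (Fin 2 × Fin 2) ℂ)
        - (q ^ 2 / 2 : ℝ) • Nbot + (q / 2 : ℝ) • (Nzero - None')).PosSemidef
    rw [decomp]
    exact (((psd_rsmul (proj_posSemidef _) hsq).add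
      (psd_rsmul (proj_posSemidef _) (by norm_num))).add
      (psd_rsmul (proj_posSemidef _) (by linarith))).add
      (psd_rsmul (proj_posSemidef _) (by linarith))
  · have : Nbar1 = (1 / 2 : ℝ) • (1 : Matrix (Fin 2 × Fin 2) (Fin 2 × Fin 2) ℂ)
        - ((-q) ^ 2 / 2 : ℝ) • Nbot + ((-q) / 2 : ℝ) • (Nzero - None') := by
      show _ - _ - _ = _
      rw [neg_pow]
      module
    rw [this, decomp]
    exact (((psd_rsmul (proj_posSemidef _) (by nlinarith)).add
      (psd_rsmul (proj_posSemidef _) (by norm_num))).add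
      (psd_rsmul (proj_posSemidef _) (by linarith))).add
      (psd_rsmul (proj_posSemidef _) (by linarith))
  · show (_ - _ + _) + (_ - _ - _) + _ = _
    module
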